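/- (Existence of disease-free equilibria) For every p > 0: the point with S_1 = p and all other eleven components equal to 0 (the G1DFE), and the point with S_2 = p and all other components 0 (the G2DFE), are equilibria of the 2-group behavior model, i.e., the vector field F vanishes there, for all admissible parameter values. Moreover, for 0 < k < 1, the coexistence point with S_1 = kp, S_2 = (1−k)p, and all other components 0 (the G3DFE) is an equilibrium of the 2-group behavior model if and only if c12 = c21. -/

import Mathlib

/-- The vector field `F` of the 2-group behavior model on `ℝ^12`, with state ordering
`x = (S1, S2, E1, E2, Ia1, Ia2, Is1, Is2, Ih1, Ih2, R1, R2)`. -/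
noncomputable def twoGroupField (βa βi βh σe σi γa γh δh ξ θl r q a1 a2 c12 c21 : ℝ)
    (x : Fin 12 → ℝ) : Fin 12 → ℝ :=
  let S1 := x 0; let S2 := x 1; let E1 := x 2; let E2 := x 3
  let Ia1 := x 4; let Ia2 := x 5; let Is1 := x 6; let Is2 := x 7
  let Ih1 := x 8; let Ih2 := x 9; let R1 := x 10; let R2 := x 11
  let N := S1 + S2 + E1 + E2 + Ia1 + Ia2 + Is1 + Is2 + Ih1 + Ih2 + R1 + R2
  let N1 := S1 + E1 + Ia1 + Is1 + Ih1 + R1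
  let N2 := S2 + E2 + Ia2 + Is2 + Ih2 + R2
  let cA1 := Real.exp (-a1 * (Ih1 + Ih2) / N)
  let cA2 := Real.exp (-a2 * (Ih1 + Ih2) / N)
  let Λ := cA1 * (βa * Ia1 + βi * Is1 + βh * Ih1) + cA2 * (βa * Ia2 + βi * Is2 + βh * Ih2)
  let lam1 := θl * cA1 * (S1 / N) * Λ
  let lam2 := θl * cA2 * (S2 / N) * Λ
  ![ξ * R1 - lam1 + (c12 * S2 * N1 / N - c21 * S1 * N2 / N),
    ξ * R2 - lam2 + (c21 * S1 * N2 / N - c12 * S2 * N1 / N),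
    lam1 - σe * E1 + (c12 * E2 * N1 / N - c21 * E1 * N2 / N),
    lam2 - σe * E2 + (c21 * E1 * N2 / N - c12 * E2 * N1 / N),
    (1 - r) * σe * E1 - γa * Ia1 + (c12 * Ia2 * N1 / N - c21 * Ia1 * N2 / N),
    (1 - r) * σe * E2 - γa * Ia2 + (c21 * Ia1 * N2 / N - c12 * Ia2 * N1 / N),
    r * σe * E1 - σi * Is1 + (c12 * Is2 * N1 / N - c21 * Is1 * N2 / N),
    r * σe * E2 - σi * Is2 + (c21 * Is1 * N2 / N - c12 * Is2 * N1 / N),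
    q * σi * Is1 - (γh + δh) * Ih1 + (c12 * Ih2 * N1 / N - c21 * Ih1 * N2 / N),
    q * σi * Is2 - (γh + δh) * Ih2 + (c21 * Ih1 * N2 / N - c12 * Ih2 * N1 / N),
    γa * Ia1 + (1 - q) * σi * Is1 + γh * Ih1 - ξ * R1 + (c12 * R2 * N1 / N - c21 * R1 * N2 / N),
    γa * Ia2 + (1 - q) * σi * Is2 + γh * Ih2 - ξ * R2 + (c21 * R1 * N2 / N - c12 * R2 * N1 / N)]


lemma vec12_eval (a b c d e f g h i j k l : ℝ) :
    (![a,b,c,d,e,f,g,h,i,j,k,l] : Fin 12 → ℝ) 0 = a ∧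
    (![a,b,c,d,e,f,g,h,i,j,k,l] : Fin 12 → ℝ) 1 = b ∧
    (![a,b,c,d,e,f,g,h,i,j,k,l] : Fin 12 → ℝ) 2 = c ∧
    (![a,b,c,d,e,f,g,h,i,j,k,l] : Fin 12 → ℝ) 3 = d ∧
    (![a,b,c,d,e,f,g,h,i,j,k,l] : Fin 12 → ℝ) 4 = e ∧
    (![a,b,c,d,e,f,g,h,i,j,k,l] : Fin 12 → ℝ) 5 = f ∧
    (![a,b,c,d,e,f,g,h,i,j,k,l] : Fin 12 → ℝ) 6 = g ∧
    (![a,b,c,d,e,f,g,h,i,j,k,l] : Fin 12 → ℝ) 7 = h ∧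
    (![a,b,c,d,e,f,g,h,i,j,k,l] : Fin 12 → ℝ) 8 = i ∧
    (![a,b,c,d,e,f,g,h,i,j,k,l] : Fin 12 → ℝ) 9 = j ∧
    (![a,b,c,d,e,f,g,h,i,j,k,l] : Fin 12 → ℝ) 10 = k ∧
    (![a,b,c,d,e,f,g,h,i,j,k,l] : Fin 12 → ℝ) 11 = l :=
  ⟨rfl,rfl,rfl,rfl,rfl,rfl,rfl,rfl,rfl,rfl,rfl,rfl⟩

/-- **Existence of disease-free equilibria of the 2-group behavior model.**
For every `p > 0`, the Group 1-only point (`S1 = p`, everything else `0`, the G1DFE) and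
the Group 2-only point (`S2 = p`, everything else `0`, the G2DFE) are equilibria of the
2-group behavior model for all admissible parameter values; and for `0 < k < 1` the
coexistence point (`S1 = k p`, `S2 = (1−k) p`, everything else `0`, the G3DFE) is an
equilibrium if and only if `c12 = c21`. -/
theorem disease_free_equilibria_exist
    (βa βi βh σe σi γa γh δh ξ θl r q a1 a2 c12 c21 : ℝ)
    (hβa : 0 < βa) (hβi : 0 < βi) (hβh : 0 < βh) (hσe : 0 < σe) (hσi : 0 < σi)
    (hγa : 0 < γa) (hγh : 0 < γh) (hδh : 0 < δh) (hξ : 0 < ξ)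
    (hr : r ∈ Set.Ioo (0 : ℝ) 1) (hq : q ∈ Set.Ioo (0 : ℝ) 1)
    (hθl : θl ∈ Set.Ioc (0 : ℝ) 1) (ha1 : 0 ≤ a1) (ha2 : 0 ≤ a2)
    (hc12 : 0 < c12) (hc21 : 0 < c21)
    (p : ℝ) (hp : 0 < p) :
    twoGroupField βa βi βh σe σi γa γh δh ξ θl r q a1 a2 c12 c21
        ![p, 0, 0, 0, 0, 0, 0, 0, 0, 0, 0, 0] = 0
      ∧ twoGroupField βa βi βh σe σi γa γh δh ξ θl r q a1 a2 c12 c21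
          ![0, p, 0, 0, 0, 0, 0, 0, 0, 0, 0, 0] = 0
      ∧ ∀ k : ℝ, 0 < k → k < 1 →
          (twoGroupField βa βi βh σe σi γa γh δh ξ θl r q a1 a2 c12 c21
              ![k * p, (1 - k) * p, 0, 0, 0, 0, 0, 0, 0, 0, 0, 0] = 0 ↔ c12 = c21) := by
  have hp' : p ≠ 0 := ne_of_gt hp
  refine ⟨?_, ?_, ?_⟩
  · obtain ⟨h0,h1,h2,h3,h4,h5,h6,h7,h8,h9,h10,h11⟩ :=
      vec12_eval p 0 0 0 0 0 0 0 0 0 0 (0:ℝ)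
    funext i
    fin_cases i <;>
      · show _ = (0:ℝ)
        simp only [twoGroupField, h0,h1,h2,h3,h4,h5,h6,h7,h8,h9,h10,h11,
          Matrix.cons_val_zero, Matrix.cons_val_one, Matrix.head_cons]
        norm_num [hp']
  · obtain ⟨h0,h1,h2,h3,h4,h5,h6,h7,h8,h9,h10,h11⟩ :=
      vec12_eval 0 p 0 0 0 0 0 0 0 0 0 (0:ℝ)
    funext i
    fin_cases i <;>
      · show _ = (0:ℝ)
        simp only [twoGroupField, h0,h1,h2,h3,h4,h5,h6,h7,h8,h9,h10,h11,
          Matrix.cons_val_zero, Matrix.cons_val_one, Matrix.head_cons]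
        norm_num [hp']
  · intro k hk0 hk1
    obtain ⟨h0,h1,h2,h3,h4,h5,h6,h7,h8,h9,h10,h11⟩ :=
      vec12_eval (k*p) ((1-k)*p) 0 0 0 0 0 0 0 0 0 (0:ℝ)
    constructor
    · intro h
      have he := congrFun h 0
      simp only [twoGroupField, h0,h1,h2,h3,h4,h5,h6,h7,h8,h9,h10,h11,
        Matrix.cons_val_zero, Matrix.cons_val_one, Matrix.head_cons,
        Pi.zero_apply] at he
      norm_num [hp'] at he
      have hN : k * p + (1 - k) * p = p := by ring
      rw [hN] at he
      have h1k : (0:ℝ) < 1 - k := by linarith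
      have hkey : (c12 - c21) * ((1 - k) * p * (k * p)) = 0 := by
        field_simp at he
        linear_combination p * he
      rcases mul_eq_zero.mp hkey with hd | hd
      · linarith [sub_eq_zero.mp hd]
      · exact absurd hd (ne_of_gt (mul_pos (mul_pos h1k hp) (mul_pos hk0 hp)))
    · intro hcc
      subst hcc
      funext i
      fin_cases i <;>
        · show _ = (0:ℝ)
          simp only [twoGroupField, h0,h1,h2,h3,h4,h5,h6,h7,h8,h9,h10,h11,
            Matrix.cons_val_zero, Matrix.cons_val_one, Matrix.head_cons]
          norm_num [hp'] <;> ring
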